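/- arXiv:1407.6458 — 2 statements merged into one kernel-verified Lean document; each statement's English description precedes it below -/
import Mathlib

section
/- Let Ψ(x,z) = e^{xz}·[[z − x⁻¹, x⁻², −x⁻³],[0, z − x⁻¹, x⁻²],[0, 0, z − x⁻¹]]. Then −∂²Ψ/∂x² + 2·[[x⁻², −2x⁻³, 3x⁻⁴],[0, x⁻², −2x⁻³],[0, 0, x⁻²]]·Ψ = −z²·Ψ for all x ≠ 0 and all z. -/
open Matrix

noncomputable def Psi (x z : ℂ) : Matrix (Fin 3) (Fin 3) ℂ :=
  Complex.exp (x * z) •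
    !![z - x⁻¹, (x ^ 2)⁻¹, -(x ^ 3)⁻¹;
       0, z - x⁻¹, (x ^ 2)⁻¹;
       0, 0, z - x⁻¹]

noncomputable def U (x : ℂ) : Matrix (Fin 3) (Fin 3) ℂ :=
  (2 : ℂ) • !![(x ^ 2)⁻¹, -2 * (x ^ 3)⁻¹, 3 * (x ^ 4)⁻¹;
               0, (x ^ 2)⁻¹, -2 * (x ^ 3)⁻¹;
               0, 0, (x ^ 2)⁻¹]

/-- `exp(sz)` times a polynomial in `s⁻¹`. -/
noncomputable def G (z a b c d e f : ℂ) : ℂ → ℂ := fun s =>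
  Complex.exp (s * z) *
    (a + b * s⁻¹ + c * (s ^ 2)⁻¹ + d * (s ^ 3)⁻¹ + e * (s ^ 4)⁻¹ + f * (s ^ 5)⁻¹)

lemma hasDerivAt_invpow (n : ℕ) {s : ℂ} (hs : s ≠ 0) :
    HasDerivAt (fun t : ℂ => (t ^ n)⁻¹) (-(n : ℂ) * (s ^ (n + 1))⁻¹) s := by
  have h : HasDerivAt (fun t : ℂ => (t ^ n)⁻¹) _ s := (hasDerivAt_pow n s).fun_inv (pow_ne_zero n hs)
  convert h using 1
  rcases n with _ | m
  · simp
  · simp only [Nat.add_sub_cancel]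
    field_simp
    ring

lemma master (z a b c d e : ℂ) {s : ℂ} (hs : s ≠ 0) :
    HasDerivAt (G z a b c d e 0)
      (G z (a * z) (b * z) (c * z - b) (d * z - 2 * c) (e * z - 3 * d) (-4 * e) s) s := by
  have he : HasDerivAt (fun t : ℂ => Complex.exp (t * z)) (Complex.exp (s * z) * z) s := by
    simpa using ((hasDerivAt_id s).mul_const z).cexp
  have h1 : HasDerivAt (fun t : ℂ => t⁻¹) (-((s ^ 2)⁻¹)) s := by
    simpa using hasDerivAt_inv hs
  have h2 := hasDerivAt_invpow 2 hs
  have h3 := hasDerivAt_invpow 3 hs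
  have h4 := hasDerivAt_invpow 4 hs
  have hp : HasDerivAt
      (fun t : ℂ => a + b * t⁻¹ + c * (t ^ 2)⁻¹ + d * (t ^ 3)⁻¹ + e * (t ^ 4)⁻¹ + 0 * (t ^ 5)⁻¹)
      (b * (-((s ^ 2)⁻¹)) + c * (-(2 : ℂ) * (s ^ 3)⁻¹) + d * (-(3 : ℂ) * (s ^ 4)⁻¹) +
        e * (-(4 : ℂ) * (s ^ 5)⁻¹)) s := by
    have := (((((hasDerivAt_const s a).add (h1.const_mul b)).add (h2.const_mul c)).add
      (h3.const_mul d)).add (h4.const_mul e)).add ((hasDerivAt_invpow 5 hs).const_mul 0)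
    refine HasDerivAt.congr_deriv this ?_
    push_cast
    ring
  have key := he.mul hp
  refine HasDerivAt.congr_deriv key ?_
  simp only [G]
  ring

lemma second_deriv_eq {g g1 g2 : ℂ → ℂ}
    (h1 : ∀ s : ℂ, s ≠ 0 → HasDerivAt g (g1 s) s)
    (h2 : ∀ s : ℂ, s ≠ 0 → HasDerivAt g1 (g2 s) s)
    {x : ℂ} (hx : x ≠ 0) : iteratedDeriv 2 g x = g2 x := by
  have hev : deriv g =ᶠ[nhds x] g1 := by
    filter_upwards [isOpen_compl_singleton.mem_nhds hx] with s hs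
    exact (h1 s hs).deriv
  have h2' : iteratedDeriv 2 g x = deriv (deriv g) x := by
    rw [iteratedDeriv_succ, iteratedDeriv_one]
  rw [h2', hev.deriv_eq]
  exact (h2 x hx).deriv

lemma d2G (z a b c d : ℂ) {x : ℂ} (hx : x ≠ 0) :
    iteratedDeriv 2 (G z a b c d 0 0) x =
      G z (a * z * z) (b * z * z) ((c * z - b) * z - b * z)
        ((d * z - 2 * c) * z - 2 * (c * z - b))
        ((0 - 3 * d) * z - 3 * (d * z - 2 * c)) (-4 * (0 - 3 * d)) x := by
  refine second_deriv_eq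
    (g1 := G z (a * z) (b * z) (c * z - b) (d * z - 2 * c) (0 - 3 * d) 0)
    (fun s hs => ?_) (fun s hs => ?_) hx
  · simpa using master z a b c d 0 hs
  · simpa using master z (a * z) (b * z) (c * z - b) (d * z - 2 * c) (0 - 3 * d) hs

theorem stmt5 (x z : ℂ) (hx : x ≠ 0) :
    -(Matrix.of fun i j => iteratedDeriv 2 (fun s => Psi s z i j) x) + U x * Psi x z
      = (-(z ^ 2)) • Psi x z := by
  have p00 : Psi x z 0 0 = Complex.exp (x * z) * (z - x⁻¹) := by
    simp [Psi, Matrix.vecHead, Matrix.vecTail]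
  have p01 : Psi x z 0 1 = Complex.exp (x * z) * (x ^ 2)⁻¹ := by
    simp [Psi, Matrix.vecHead, Matrix.vecTail]
  have p02 : Psi x z 0 2 = Complex.exp (x * z) * (-(x ^ 3)⁻¹) := by
    simp [Psi, Matrix.vecHead, Matrix.vecTail]
  have p10 : Psi x z 1 0 = Complex.exp (x * z) * 0 := by
    simp [Psi, Matrix.vecHead, Matrix.vecTail]
  have p11 : Psi x z 1 1 = Complex.exp (x * z) * (z - x⁻¹) := by
    simp [Psi, Matrix.vecHead, Matrix.vecTail]
  have p12 : Psi x z 1 2 = Complex.exp (x * z) * (x ^ 2)⁻¹ := by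
    simp [Psi, Matrix.vecHead, Matrix.vecTail]
  have p20 : Psi x z 2 0 = Complex.exp (x * z) * 0 := by
    simp [Psi, Matrix.vecHead, Matrix.vecTail]
  have p21 : Psi x z 2 1 = Complex.exp (x * z) * 0 := by
    simp [Psi, Matrix.vecHead, Matrix.vecTail]
  have p22 : Psi x z 2 2 = Complex.exp (x * z) * (z - x⁻¹) := by
    simp [Psi, Matrix.vecHead, Matrix.vecTail]
  have u00 : U x 0 0 = 2 * (x ^ 2)⁻¹ := by
    simp [U, Matrix.vecHead, Matrix.vecTail]
  have u01 : U x 0 1 = 2 * (-2 * (x ^ 3)⁻¹) := by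
    simp [U, Matrix.vecHead, Matrix.vecTail]
  have u02 : U x 0 2 = 2 * (3 * (x ^ 4)⁻¹) := by
    simp [U, Matrix.vecHead, Matrix.vecTail]
  have u10 : U x 1 0 = 2 * (0:ℂ) := by
    simp [U, Matrix.vecHead, Matrix.vecTail]
  have u11 : U x 1 1 = 2 * (x ^ 2)⁻¹ := by
    simp [U, Matrix.vecHead, Matrix.vecTail]
  have u12 : U x 1 2 = 2 * (-2 * (x ^ 3)⁻¹) := by
    simp [U, Matrix.vecHead, Matrix.vecTail]
  have u20 : U x 2 0 = 2 * (0:ℂ) := by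
    simp [U, Matrix.vecHead, Matrix.vecTail]
  have u21 : U x 2 1 = 2 * (0:ℂ) := by
    simp [U, Matrix.vecHead, Matrix.vecTail]
  have u22 : U x 2 2 = 2 * (x ^ 2)⁻¹ := by
    simp [U, Matrix.vecHead, Matrix.vecTail]
  have e00 : (fun s => Psi s z 0 0) = G z z (-1) 0 0 0 0 := by
    funext s
    simp only [G]
    simp [Psi, Matrix.vecHead, Matrix.vecTail]
    try ring
  have e01 : (fun s => Psi s z 0 1) = G z 0 0 1 0 0 0 := by
    funext s
    simp only [G]
    simp [Psi, Matrix.vecHead, Matrix.vecTail]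
    try ring
  have e02 : (fun s => Psi s z 0 2) = G z 0 0 0 (-1) 0 0 := by
    funext s
    simp only [G]
    simp [Psi, Matrix.vecHead, Matrix.vecTail]
    try ring
  have e10 : (fun s => Psi s z 1 0) = G z 0 0 0 0 0 0 := by
    funext s
    simp only [G]
    simp [Psi, Matrix.vecHead, Matrix.vecTail]
    try ring
  have e11 : (fun s => Psi s z 1 1) = G z z (-1) 0 0 0 0 := by
    funext s
    simp only [G]
    simp [Psi, Matrix.vecHead, Matrix.vecTail]
    try ring
  have e12 : (fun s => Psi s z 1 2) = G z 0 0 1 0 0 0 := by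
    funext s
    simp only [G]
    simp [Psi, Matrix.vecHead, Matrix.vecTail]
    try ring
  have e20 : (fun s => Psi s z 2 0) = G z 0 0 0 0 0 0 := by
    funext s
    simp only [G]
    simp [Psi, Matrix.vecHead, Matrix.vecTail]
    try ring
  have e21 : (fun s => Psi s z 2 1) = G z 0 0 0 0 0 0 := by
    funext s
    simp only [G]
    simp [Psi, Matrix.vecHead, Matrix.vecTail]
    try ring
  have e22 : (fun s => Psi s z 2 2) = G z z (-1) 0 0 0 0 := by
    funext s
    simp only [G]
    simp [Psi, Matrix.vecHead, Matrix.vecTail]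
    try ring
  have q00 : -(iteratedDeriv 2 (fun s => Psi s z 0 0) x)
      + (U x 0 0 * Psi x z 0 0 + U x 0 1 * Psi x z 1 0 + U x 0 2 * Psi x z 2 0)
      = -(z ^ 2) * Psi x z 0 0 := by
    rw [e00, d2G z z (-1) 0 0 hx, p00, p10, p20, u00, u01, u02]
    simp only [G]
    ring
  have q01 : -(iteratedDeriv 2 (fun s => Psi s z 0 1) x)
      + (U x 0 0 * Psi x z 0 1 + U x 0 1 * Psi x z 1 1 + U x 0 2 * Psi x z 2 1)
      = -(z ^ 2) * Psi x z 0 1 := by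
    rw [e01, d2G z 0 0 1 0 hx, p01, p11, p21, u00, u01, u02]
    simp only [G]
    ring
  have q02 : -(iteratedDeriv 2 (fun s => Psi s z 0 2) x)
      + (U x 0 0 * Psi x z 0 2 + U x 0 1 * Psi x z 1 2 + U x 0 2 * Psi x z 2 2)
      = -(z ^ 2) * Psi x z 0 2 := by
    rw [e02, d2G z 0 0 0 (-1) hx, p02, p12, p22, u00, u01, u02]
    simp only [G]
    ring
  have q10 : -(iteratedDeriv 2 (fun s => Psi s z 1 0) x)
      + (U x 1 0 * Psi x z 0 0 + U x 1 1 * Psi x z 1 0 + U x 1 2 * Psi x z 2 0)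
      = -(z ^ 2) * Psi x z 1 0 := by
    rw [e10, d2G z 0 0 0 0 hx, p00, p10, p20, u10, u11, u12]
    simp only [G]
    ring
  have q11 : -(iteratedDeriv 2 (fun s => Psi s z 1 1) x)
      + (U x 1 0 * Psi x z 0 1 + U x 1 1 * Psi x z 1 1 + U x 1 2 * Psi x z 2 1)
      = -(z ^ 2) * Psi x z 1 1 := by
    rw [e11, d2G z z (-1) 0 0 hx, p01, p11, p21, u10, u11, u12]
    simp only [G]
    ring
  have q12 : -(iteratedDeriv 2 (fun s => Psi s z 1 2) x)
      + (U x 1 0 * Psi x z 0 2 + U x 1 1 * Psi x z 1 2 + U x 1 2 * Psi x z 2 2)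
      = -(z ^ 2) * Psi x z 1 2 := by
    rw [e12, d2G z 0 0 1 0 hx, p02, p12, p22, u10, u11, u12]
    simp only [G]
    ring
  have q20 : -(iteratedDeriv 2 (fun s => Psi s z 2 0) x)
      + (U x 2 0 * Psi x z 0 0 + U x 2 1 * Psi x z 1 0 + U x 2 2 * Psi x z 2 0)
      = -(z ^ 2) * Psi x z 2 0 := by
    rw [e20, d2G z 0 0 0 0 hx, p00, p10, p20, u20, u21, u22]
    simp only [G]
    ring
  have q21 : -(iteratedDeriv 2 (fun s => Psi s z 2 1) x)
      + (U x 2 0 * Psi x z 0 1 + U x 2 1 * Psi x z 1 1 + U x 2 2 * Psi x z 2 1)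
      = -(z ^ 2) * Psi x z 2 1 := by
    rw [e21, d2G z 0 0 0 0 hx, p01, p11, p21, u20, u21, u22]
    simp only [G]
    ring
  have q22 : -(iteratedDeriv 2 (fun s => Psi s z 2 2) x)
      + (U x 2 0 * Psi x z 0 2 + U x 2 1 * Psi x z 1 2 + U x 2 2 * Psi x z 2 2)
      = -(z ^ 2) * Psi x z 2 2 := by
    rw [e22, d2G z z (-1) 0 0 hx, p02, p12, p22, u20, u21, u22]
    simp only [G]
    ring
  ext i j
  simp only [Matrix.add_apply, Matrix.neg_apply, Matrix.of_apply, Matrix.smul_apply,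
    Matrix.mul_apply, Fin.sum_univ_three, smul_eq_mul]
  fin_cases i <;> fin_cases j
  · exact q00
  · exact q01
  · exact q02
  · exact q10
  · exact q11
  · exact q12
  · exact q20
  · exact q21
  · exact q22
end

section
/- Let Ψ(x,z) = e^{xz}·[[z − x⁻¹, x⁻², −x⁻³],[0, z − x⁻¹, x⁻²],[0, 0, z − x⁻¹]]. Then (∂_z²Ψ)·E₃₁ + (∂_zΨ)·[[0,0,0],[1,0,0],[−2z⁻¹,1,0]] + Ψ·[[1,0,0],[−2z⁻¹,2,0],[0,0,1]] = [[1,0,0],[x,2,0],[x²,x,1]]·Ψ for all x ≠ 0, z ≠ 0, where E₃₁ is the 3×3 matrix unit with 1 in position (3,1). -/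
open Matrix

lemma hasDerivAt_aux (x a b z : ℂ) :
    HasDerivAt (fun w => Complex.exp (x*w) * (a*w+b))
      (Complex.exp (x*z) * (x*(a*z+b)+a)) z := by
  have h1 : HasDerivAt (fun w => Complex.exp (x*w)) (Complex.exp (x*z) * x) z := by
    have h := ((Complex.hasDerivAt_exp (x*z)).comp z
      ((hasDerivAt_id z).const_mul x))
    rw [mul_one] at h; exact h
  have h2 : HasDerivAt (fun w : ℂ => a*w+b) a z := by
    simpa using ((hasDerivAt_id z).const_mul a).add_const b
  have := h1.mul h2
  rw [show Complex.exp (x*z) * (x*(a*z+b)+a) = Complex.exp (x*z) * x * (a*z+b) + Complex.exp (x*z) * a by ring]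
  exact this

lemma deriv_aux (x a b z : ℂ) :
    deriv (fun w => Complex.exp (x*w) * (a*w+b)) z
      = Complex.exp (x*z) * ((a*x)*z + (x*b+a)) := by
  rw [(hasDerivAt_aux x a b z).deriv]; ring

lemma deriv2_aux (x a b z : ℂ) :
    iteratedDeriv 2 (fun w => Complex.exp (x*w) * (a*w+b)) z
      = Complex.exp (x*z) * ((a*x^2)*z + (x^2*b+2*a*x)) := by
  rw [iteratedDeriv_succ, iteratedDeriv_one]
  have : deriv (fun w => Complex.exp (x*w) * (a*w+b))
      = fun w => Complex.exp (x*w) * ((a*x)*w + (x*b+a)) := by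
    funext w; exact deriv_aux x a b w
  rw [this, deriv_aux]
  ring

lemma derivCst (x c z : ℂ) :
    deriv (fun w => Complex.exp (x*w) * c) z = Complex.exp (x*z) * (x*c) := by
  have : (fun w => Complex.exp (x*w) * c) = fun w => Complex.exp (x*w) * ((0:ℂ)*w+c) := by
    funext w; ring
  rw [this, deriv_aux]; ring

lemma deriv2Cst (x c z : ℂ) :
    iteratedDeriv 2 (fun w => Complex.exp (x*w) * c) z
      = Complex.exp (x*z) * (x^2*c) := by
  have : (fun w => Complex.exp (x*w) * c) = fun w => Complex.exp (x*w) * ((0:ℂ)*w+c) := by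
    funext w; ring
  rw [this, deriv2_aux]; ring

lemma deriv_lin (x c z : ℂ) :
    deriv (fun w => Complex.exp (x*w) * (w - c)) z
      = Complex.exp (x*z) * (x*z + (-(x*c)+1)) := by
  have : (fun w => Complex.exp (x*w) * (w - c))
      = fun w => Complex.exp (x*w) * ((1:ℂ)*w+(-c)) := by
    funext w; ring
  rw [this, deriv_aux]; ring

lemma deriv2_lin (x c z : ℂ) :
    iteratedDeriv 2 (fun w => Complex.exp (x*w) * (w - c)) z
      = Complex.exp (x*z) * (x^2*z + (-(x^2*c)+2*x)) := by
  have : (fun w => Complex.exp (x*w) * (w - c))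
      = fun w => Complex.exp (x*w) * ((1:ℂ)*w+(-c)) := by
    funext w; ring
  rw [this, deriv2_aux]; ring

set_option maxHeartbeats 1000000 in
theorem stmt6 (x z : ℂ) (hx : x ≠ 0) (hz : z ≠ 0) :
    (Matrix.of fun i j => iteratedDeriv 2 (fun w => Psi x w i j) z)
        * !![0, 0, 0; 0, 0, 0; 1, 0, 0]
      + (Matrix.of fun i j => deriv (fun w => Psi x w i j) z)
        * !![0, 0, 0; 1, 0, 0; -2 * z⁻¹, 1, 0]
      + Psi x z * !![1, 0, 0; -2 * z⁻¹, 2, 0; 0, 0, 1]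
      = !![1, 0, 0; x, 2, 0; x ^ 2, x, 1] * Psi x z := by
  ext i j
  fin_cases i <;> fin_cases j <;>
    · simp only [Psi, Matrix.add_apply, Matrix.mul_apply, Matrix.of_apply,
        Matrix.smul_apply, smul_eq_mul, Fin.sum_univ_three, Fin.zero_eta, Fin.mk_one,
        Fin.reduceFinMk, Fin.isValue,
        Matrix.cons_val', Matrix.cons_val_zero, Matrix.cons_val_one, Matrix.head_cons,
        Matrix.cons_val_two, Matrix.tail_cons, Matrix.head_fin_const,
        Matrix.empty_val', Matrix.cons_val_fin_one]
      simp only [deriv_lin, deriv2_lin, derivCst, deriv2Cst]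
      generalize Complex.exp (x*z) = E
      field_simp
      try ring_nf
      try field_simp
      try ring1
end
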